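/- If u : [0,1]² → ℝ is Lipschitz with constant C, then every detail coefficient satisfies |d_{(i,j),e,l}| ≤ C·√2·2^{−(l+1)} for all e ∈ {0,1}² \ {(0,0)} (cancellation property: details decay geometrically with the level l). -/

import Mathlib

open MeasureTheory

/-- Scaling function `φ_{(i,j),l}(x) = 2^{2l} χ_{[0,1]²}(2^l x₁ - i, 2^l x₂ - j)`. -/
noncomputable def scalingFun (l i j : ℕ) (x : ℝ × ℝ) : ℝ :=
  2 ^ (2 * l) *
    Set.indicator (Set.Icc (0 : ℝ) 1 ×ˢ Set.Icc (0 : ℝ) 1) (fun _ => (1 : ℝ))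
      (2 ^ l * x.1 - i, 2 ^ l * x.2 - j)

/-- Haar-type wavelet `ψ_{(i,j),e,l} = Σ_{a∈{0,1}²} 2^{-2} (-1)^{a·e} φ_{2(i,j)+a,l+1}`. -/
noncomputable def waveletFun (l i j : ℕ) (e : ℕ × ℕ) (x : ℝ × ℝ) : ℝ :=
  ∑ a ∈ (({0, 1} : Finset ℕ) ×ˢ ({0, 1} : Finset ℕ)),
    (1 / 4 : ℝ) * (-1 : ℝ) ^ (a.1 * e.1 + a.2 * e.2) *
      scalingFun (l + 1) (2 * i + a.1) (2 * j + a.2) x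

open Set

def sbox (L r s : ℕ) : Set (ℝ × ℝ) :=
  Icc ((r : ℝ)/2^L) ((r+1)/2^L) ×ˢ Icc ((s : ℝ)/2^L) ((s+1)/2^L)

lemma mem_sbox_iff (L r s : ℕ) (x : ℝ × ℝ) :
    ((2:ℝ) ^ L * x.1 - r, (2:ℝ) ^ L * x.2 - s) ∈ (Icc (0:ℝ) 1 ×ˢ Icc (0:ℝ) 1) ↔
      x ∈ sbox L r s := by
  have hp : (0:ℝ) < 2 ^ L := by positivity
  simp only [sbox, mem_prod, mem_Icc]
  rw [div_le_iff₀ hp, div_le_iff₀ hp, le_div_iff₀ hp, le_div_iff₀ hp]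
  constructor <;> rintro ⟨⟨h1, h2⟩, h3, h4⟩ <;> refine ⟨⟨?_, ?_⟩, ?_, ?_⟩ <;> nlinarith

lemma scalingFun_eq (L r s : ℕ) (x : ℝ × ℝ) :
    scalingFun L r s x = 2 ^ (2*L) * (sbox L r s).indicator (fun _ => (1:ℝ)) x := by
  unfold scalingFun
  classical
  congr 1
  simp only [Set.indicator_apply]
  exact if_congr (mem_sbox_iff L r s x) rfl rfl

lemma sbox_measurable (L r s : ℕ) : MeasurableSet (sbox L r s) :=
  (measurableSet_Icc).prod measurableSet_Icc

lemma scalingFun_nonneg (L r s : ℕ) (x : ℝ × ℝ) : 0 ≤ scalingFun L r s x := by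
  rw [scalingFun_eq]
  have := Set.indicator_nonneg (fun y (_ : y ∈ sbox L r s) => (zero_le_one : (0:ℝ) ≤ 1)) x
  positivity

lemma volume_sbox (L r s : ℕ) :
    volume (sbox L r s) = ENNReal.ofReal ((1/2^L) * (1/2^L)) := by
  rw [sbox, Measure.volume_eq_prod, Measure.prod_prod, Real.volume_Icc, Real.volume_Icc,
    show ((r:ℝ)+1)/2^L - (r:ℝ)/2^L = 1/2^L by ring,
    show ((s:ℝ)+1)/2^L - (s:ℝ)/2^L = 1/2^L by ring,
    ← ENNReal.ofReal_mul (by positivity)]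

lemma integral_scalingFun (L r s : ℕ) : ∫ x : ℝ × ℝ, scalingFun L r s x = 1 := by
  simp_rw [scalingFun_eq]
  rw [integral_const_mul, integral_indicator_const _ (sbox_measurable L r s),
    measureReal_def, volume_sbox, smul_eq_mul, mul_one, ENNReal.toReal_ofReal (by positivity)]
  rw [pow_mul, sq]
  have hp : (0:ℝ) < 2 ^ L := by positivity
  field_simp [mul_pow]
  rw [← pow_mul, ← pow_mul, mul_comm]

lemma integrable_scalingFun (L r s : ℕ) : Integrable (scalingFun L r s) := by
  have h : scalingFun L r s = fun x => (sbox L r s).indicator (fun _ => (2:ℝ)^(2*L)) x := by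
    funext x
    rw [scalingFun_eq]
    by_cases hx : x ∈ sbox L r s <;> simp [hx]
  rw [h]
  rw [integrable_indicator_iff (sbox_measurable L r s)]
  exact integrableOn_const ((isCompact_Icc.prod isCompact_Icc).measure_lt_top.ne)

lemma integrable_mul_scalingFun {u : ℝ × ℝ → ℝ} (hu : Continuous u) (L r s : ℕ) :
    Integrable (fun x => u x * scalingFun L r s x) := by
  have h : (fun x => u x * scalingFun L r s x)
      = fun x => (sbox L r s).indicator (fun y => u y * 2^(2*L)) x := by
    funext x
    rw [scalingFun_eq]
    by_cases hx : x ∈ sbox L r s <;> simp [hx]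
  rw [h]
  rw [integrable_indicator_iff (sbox_measurable L r s)]
  exact ((hu.mul continuous_const).continuousOn).integrableOn_compact
    (isCompact_Icc.prod isCompact_Icc)

lemma sign_sum_zero (e : ℕ × ℕ) (he : e ∈ (({0, 1} : Finset ℕ) ×ˢ ({0, 1} : Finset ℕ)))
    (hne : e ≠ (0, 0)) :
    ∑ a ∈ (({0, 1} : Finset ℕ) ×ˢ ({0, 1} : Finset ℕ)),
      (1/4 : ℝ) * (-1 : ℝ) ^ (a.1 * e.1 + a.2 * e.2) = 0 := by
  obtain ⟨e1, e2⟩ := e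
  simp only [Finset.mem_product, Finset.mem_insert, Finset.mem_singleton] at he
  obtain ⟨h1, h2⟩ := he
  rw [Finset.sum_product]
  rcases h1 with rfl | rfl <;> rcases h2 with rfl | rfl
  · exact absurd rfl hne
  all_goals norm_num [Finset.sum_pair]

set_option maxHeartbeats 1000000 in
open Set in
/-- Cancellation property: if `u` is Lipschitz with constant `C`, then every
detail coefficient satisfies `|d_{(i,j),e,l}| ≤ C √2 · 2^{-(l+1)}` for
`e ∈ {0,1}² \ {(0,0)}`. -/
theorem detail_cancellation_lipschitz (u : ℝ × ℝ → ℝ) (C : ℝ) (hC : 0 ≤ C)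
    (hLip : ∀ x y : ℝ × ℝ, |u x - u y| ≤ C * dist x y)
    (l i j : ℕ) (hi : i ∈ Finset.range (2 ^ l)) (hj : j ∈ Finset.range (2 ^ l))
    (e : ℕ × ℕ) (he : e ∈ (({0, 1} : Finset ℕ) ×ˢ ({0, 1} : Finset ℕ)))
    (hne : e ≠ (0, 0)) :
    |∫ x : ℝ × ℝ, u x * waveletFun l i j e x| ≤ C * Real.sqrt 2 / 2 ^ (l + 1) := by
  classical
  set L := l + 1 with hL
  have hp : (0:ℝ) < 2 ^ L := by positivity
  have hu : Continuous u := by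
    have h : LipschitzWith ⟨C, hC⟩ u :=
      LipschitzWith.of_dist_le_mul fun x y => by rw [Real.dist_eq]; exact hLip x y
    exact h.continuous
  set x₀ : ℝ × ℝ := ((2*(i:ℝ)+1)/2^L, (2*(j:ℝ)+1)/2^L) with hx₀
  set sq := (({0, 1} : Finset ℕ) ×ˢ ({0, 1} : Finset ℕ)) with hsq
  set M : ℝ := C / 2 ^ L with hM
  -- integrability facts
  have hterm : ∀ a ∈ sq, Integrable (fun x : ℝ × ℝ =>
      (1/4 : ℝ) * (-1:ℝ) ^ (a.1 * e.1 + a.2 * e.2) * scalingFun L (2*i+a.1) (2*j+a.2) x) :=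
    fun a _ => (integrable_scalingFun L _ _).const_mul _
  have hψint : Integrable (waveletFun l i j e) := integrable_finset_sum _ hterm
  have hψ0 : ∫ x : ℝ × ℝ, waveletFun l i j e x = 0 := by
    unfold waveletFun
    rw [integral_finset_sum _ hterm]
    simp_rw [integral_const_mul, integral_scalingFun, mul_one]
    exact sign_sum_zero e he hne
  have huψ : Integrable (fun x => u x * waveletFun l i j e x) := by
    have hrw : (fun x => u x * waveletFun l i j e x)
        = fun x => ∑ a ∈ sq, (1/4 : ℝ) * (-1:ℝ) ^ (a.1 * e.1 + a.2 * e.2) *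
            (u x * scalingFun L (2*i+a.1) (2*j+a.2) x) := by
      funext x
      unfold waveletFun
      rw [Finset.mul_sum]
      exact Finset.sum_congr rfl fun a _ => by ring
    rw [hrw]
    exact integrable_finset_sum _ fun a _ =>
      (integrable_mul_scalingFun hu L _ _).const_mul _
  -- replace u by u - u x₀
  have hkey : ∫ x : ℝ × ℝ, u x * waveletFun l i j e x
      = ∫ x : ℝ × ℝ, (u x - u x₀) * waveletFun l i j e x := by
    have hrw : (fun x : ℝ × ℝ => (u x - u x₀) * waveletFun l i j e x)
        = fun x => u x * waveletFun l i j e x - u x₀ * waveletFun l i j e x :=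
      funext fun x => by ring
    rw [hrw, integral_sub huψ (hψint.const_mul _), integral_const_mul, hψ0,
      mul_zero, sub_zero]
  -- the dominating function
  set g : ℝ × ℝ → ℝ := fun x => ∑ a ∈ sq, (1/4 : ℝ) * M *
      scalingFun L (2*i+a.1) (2*j+a.2) x with hg
  have hg_int : Integrable g :=
    integrable_finset_sum _ fun a _ => (integrable_scalingFun L _ _).const_mul _
  have hMnn : 0 ≤ M := by positivity
  have hg_val : ∫ x : ℝ × ℝ, g x = M := by
    rw [hg, integral_finset_sum _ fun a _ => (integrable_scalingFun L _ _).const_mul _]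
    simp_rw [integral_const_mul, integral_scalingFun, mul_one]
    rw [Finset.sum_const, hsq]
    norm_num
    ring
  -- pointwise bound
  have hpt : ∀ x : ℝ × ℝ, ‖(u x - u x₀) * waveletFun l i j e x‖ ≤ g x := by
    intro x
    rw [Real.norm_eq_abs]
    unfold waveletFun
    rw [Finset.mul_sum]
    refine le_trans (Finset.abs_sum_le_sum_abs _ _) (Finset.sum_le_sum ?_)
    intro a ha
    have hφ := scalingFun_nonneg L (2*i+a.1) (2*j+a.2) x
    have habs : |(u x - u x₀) * ((1/4 : ℝ) * (-1:ℝ) ^ (a.1 * e.1 + a.2 * e.2) *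
        scalingFun L (2*i+a.1) (2*j+a.2) x)|
        = |u x - u x₀| * ((1/4) * scalingFun L (2*i+a.1) (2*j+a.2) x) := by
      rw [abs_mul, abs_mul, abs_mul, abs_pow, abs_neg, abs_one, one_pow,
        abs_of_nonneg hφ]
      norm_num
    rw [habs]
    by_cases hx : x ∈ sbox L (2*i+a.1) (2*j+a.2)
    · -- Lipschitz bound
      have hub : |u x - u x₀| ≤ M := by
        have ha' : (a.1 = 0 ∨ a.1 = 1) ∧ (a.2 = 0 ∨ a.2 = 1) := by
          simpa [hsq, Finset.mem_product] using ha
        have ha1 : (a.1 : ℝ) ≤ 1 := by rcases ha'.1 with h | h <;> simp [h]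
        have ha2 : (a.2 : ℝ) ≤ 1 := by rcases ha'.2 with h | h <;> simp [h]
        have ha1' : (0:ℝ) ≤ (a.1 : ℝ) := Nat.cast_nonneg _
        have ha2' : (0:ℝ) ≤ (a.2 : ℝ) := Nat.cast_nonneg _
        obtain ⟨⟨hx11, hx12⟩, hx21, hx22⟩ := hx
        push_cast at hx11 hx12 hx21 hx22
        have h11 : (2*(i:ℝ) + a.1) ≤ x.1 * 2 ^ L := (div_le_iff₀ hp).1 hx11
        have h12 : x.1 * 2 ^ L ≤ 2*(i:ℝ) + a.1 + 1 := (le_div_iff₀ hp).1 hx12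
        have h21 : (2*(j:ℝ) + a.2) ≤ x.2 * 2 ^ L := (div_le_iff₀ hp).1 hx21
        have h22 : x.2 * 2 ^ L ≤ 2*(j:ℝ) + a.2 + 1 := (le_div_iff₀ hp).1 hx22
        have hd1 : |x.1 - (2*(i:ℝ)+1)/2^L| ≤ 1 / 2 ^ L := by
          have heq : x.1 - (2*(i:ℝ)+1)/2^L = (x.1 * 2^L - (2*(i:ℝ)+1))/2^L := by
            field_simp
          rw [heq, abs_div, abs_of_pos hp]
          have : |x.1 * 2^L - (2*(i:ℝ)+1)| ≤ 1 := by
            rw [abs_le]; constructor <;> linarith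
          gcongr
        have hd2 : |x.2 - (2*(j:ℝ)+1)/2^L| ≤ 1 / 2 ^ L := by
          have heq : x.2 - (2*(j:ℝ)+1)/2^L = (x.2 * 2^L - (2*(j:ℝ)+1))/2^L := by
            field_simp
          rw [heq, abs_div, abs_of_pos hp]
          have : |x.2 * 2^L - (2*(j:ℝ)+1)| ≤ 1 := by
            rw [abs_le]; constructor <;> linarith
          gcongr
        have hdist : dist x x₀ ≤ 1 / 2 ^ L := by
          rw [Prod.dist_eq]
          exact max_le (by rw [Real.dist_eq]; exact hd1) (by rw [Real.dist_eq]; exact hd2)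
        calc |u x - u x₀| ≤ C * dist x x₀ := hLip x x₀
          _ ≤ C * (1 / 2 ^ L) := mul_le_mul_of_nonneg_left hdist hC
          _ = M := by rw [hM]; ring
      calc |u x - u x₀| * ((1/4) * scalingFun L (2*i+a.1) (2*j+a.2) x)
          ≤ M * ((1/4) * scalingFun L (2*i+a.1) (2*j+a.2) x) := by
            apply mul_le_mul_of_nonneg_right hub; positivity
        _ = (1/4 : ℝ) * M * scalingFun L (2*i+a.1) (2*j+a.2) x := by ring
    · have h0 : scalingFun L (2*i+a.1) (2*j+a.2) x = 0 := by
        rw [scalingFun_eq, Set.indicator_of_notMem hx, mul_zero]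
      simp [h0]
  -- conclude
  have hbound : ‖∫ x : ℝ × ℝ, (u x - u x₀) * waveletFun l i j e x‖ ≤ M := by
    calc ‖∫ x : ℝ × ℝ, (u x - u x₀) * waveletFun l i j e x‖
        ≤ ∫ x : ℝ × ℝ, g x := norm_integral_le_of_norm_le hg_int (Filter.Eventually.of_forall hpt)
      _ = M := hg_val
  rw [hkey, ← Real.norm_eq_abs]
  refine le_trans hbound ?_
  rw [hM]
  have hs : (1:ℝ) ≤ Real.sqrt 2 := by
    rw [show (1:ℝ) = Real.sqrt 1 by simp]
    exact Real.sqrt_le_sqrt (by norm_num)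
  have : C ≤ C * Real.sqrt 2 := le_mul_of_one_le_right hC hs
  gcongr
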